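/- arXiv:2604.16159 — 2 statements merged into one kernel-verified Lean document; each statement's English description precedes it below -/
import Mathlib

section
/- Let G be a graph satisfying the triangle condition TC, and let (A,B) be a shadow-closed osculating pair of sets (A = A/B, B = B/A, A and B disjoint, and there is an edge between A and B). Then for any vertex x ∉ A ∪ B and any edge ab with a ∈ A, b ∈ B, there exists a vertex x₀ ∉ A ∪ B adjacent to both a and b with x₀ ∈ I(x,a) ∩ I(x,b). -/
variable {V : Type*}

def interval (G : SimpleGraph V) (u v : V) : Set V :=
  {x | G.dist u x + G.dist x v = G.dist u v}

def GeoConvex (G : SimpleGraph V) (X : Set V) : Prop :=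
  ∀ u ∈ X, ∀ v ∈ X, interval G u v ⊆ X

def geoHull (G : SimpleGraph V) (S : Set V) : Set V :=
  ⋂₀ {C | GeoConvex G C ∧ S ⊆ C}

def shadow (G : SimpleGraph V) (A B : Set V) : Set V :=
  {x | (geoHull G (B ∪ {x}) ∩ A).Nonempty}

/-- Triangle condition. -/
def TriangleCond (G : SimpleGraph V) : Prop :=
  ∀ u v w : V, G.Adj v w → G.dist u v = G.dist u w → 1 < G.dist u v →
    ∃ x, G.Adj v x ∧ G.Adj w x ∧ G.dist u x = G.dist u v - 1

lemma interval_subset_geoHull (G : SimpleGraph V) {S : Set V} {u v : V}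
    (hu : u ∈ S) (hv : v ∈ S) : interval G u v ⊆ geoHull G S := by
  intro y hy C hC
  exact hC.1 u (hC.2 hu) v (hC.2 hv) hy

lemma equidist (G : SimpleGraph V) (hc : G.Connected)
    (A B : Set V)
    (hA : shadow G A B = A) (hB : shadow G B A = B)
    (x : V) (hx : x ∉ A ∪ B)
    (a b : V) (ha : a ∈ A) (hb : b ∈ B) (hab : G.Adj a b) :
    G.dist x a = G.dist x b := by
  have hab1 : G.dist a b = 1 := SimpleGraph.dist_eq_one_iff_adj.mpr hab
  have hba1 : G.dist b a = 1 := SimpleGraph.dist_eq_one_iff_adj.mpr hab.symm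
  have h1 : G.dist x a ≤ G.dist x b + G.dist b a := hc.dist_triangle
  have h2 : G.dist x b ≤ G.dist x a + G.dist a b := hc.dist_triangle
  by_contra hne
  rcases (by omega : G.dist x b = G.dist x a + 1 ∨ G.dist x a = G.dist x b + 1) with h | h
  · -- a ∈ interval G x b ⊆ geoHull G (B ∪ {x}), so x ∈ shadow G A B = A
    have haI : a ∈ interval G x b := by
      simp only [interval, Set.mem_setOf_eq, hab1, h]
    have : a ∈ geoHull G (B ∪ {x}) :=
      interval_subset_geoHull G (Or.inr rfl) (Or.inl hb) haI
    have : x ∈ shadow G A B := ⟨a, this, ha⟩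
    rw [hA] at this
    exact hx (Or.inl this)
  · have hbI : b ∈ interval G x a := by
      simp only [interval, Set.mem_setOf_eq, hba1, h]
    have : b ∈ geoHull G (A ∪ {x}) :=
      interval_subset_geoHull G (Or.inr rfl) (Or.inl ha) hbI
    have : x ∈ shadow G B A := ⟨b, this, hb⟩
    rw [hB] at this
    exact hx (Or.inr this)

theorem shadowClosed_osculating_Sx_nonempty (G : SimpleGraph V) (hc : G.Connected)
    (hTC : TriangleCond G)
    (A B : Set V) (hdisj : Disjoint A B)
    (hA : shadow G A B = A) (hB : shadow G B A = B)
    (hosc : ∃ a ∈ A, ∃ b ∈ B, G.Adj a b)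
    (x : V) (hx : x ∉ A ∪ B)
    (a b : V) (ha : a ∈ A) (hb : b ∈ B) (hab : G.Adj a b) :
    ∃ x₀, x₀ ∉ A ∪ B ∧ G.Adj x₀ a ∧ G.Adj x₀ b ∧
      x₀ ∈ interval G x a ∩ interval G x b := by
  have heq : G.dist x a = G.dist x b := equidist G hc A B hA hB x hx a b ha hb hab
  have hxa : x ≠ a := fun h => hx (Or.inl (h ▸ ha))
  have hpos : 0 < G.dist x a := hc.pos_dist_of_ne hxa
  rcases eq_or_lt_of_le (show 1 ≤ G.dist x a from hpos) with h1 | h1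
  · -- dist x a = 1 : x itself works
    have hxa' : G.Adj x a := SimpleGraph.dist_eq_one_iff_adj.mp h1.symm
    have hxb' : G.Adj x b := SimpleGraph.dist_eq_one_iff_adj.mp (heq ▸ h1.symm)
    exact ⟨x, hx, hxa', hxb', by
      constructor <;> simp [interval, SimpleGraph.dist_self]⟩
  · -- dist x a > 1 : apply TC
    obtain ⟨x₀, hax₀, hbx₀, hdx₀⟩ := hTC x a b hab heq h1
    have had : G.dist x₀ a = 1 := SimpleGraph.dist_eq_one_iff_adj.mpr hax₀.symm
    have hbd : G.dist x₀ b = 1 := SimpleGraph.dist_eq_one_iff_adj.mpr hbx₀.symm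
    have hIa : x₀ ∈ interval G x a := by
      simp only [interval, Set.mem_setOf_eq, hdx₀, had]; omega
    have hIb : x₀ ∈ interval G x b := by
      simp only [interval, Set.mem_setOf_eq, hdx₀, hbd]; omega
    have hx₀ : x₀ ∉ A ∪ B := by
      rintro (h | h)
      · -- x₀ ∈ A, edge x₀–b: x equidistant, contradiction
        have := equidist G hc A B hA hB x hx x₀ b h hb hbx₀.symm
        omega
      · have := equidist G hc A B hA hB x hx a x₀ ha h hax₀
        omega
    exact ⟨x₀, hx₀, hax₀.symm, hbx₀.symm, hIa, hIb⟩
end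

section
/- Let G be a graph satisfying the triangle condition TC and let (A,B) be a shadow-closed osculating pair of geodesically convex sets with residue V⁺ = V ∖ (A ∪ B). For any partition of V⁺ into A⁺ and B⁺ satisfying the implication constraints (for x,y ∈ V⁺: if y lies on a geodesic from x to some vertex of A and x ∈ A⁺ then y ∈ A⁺; if y lies on a geodesic from x to some vertex of B and x ∈ B⁺ then y ∈ B⁺), the induced subgraphs on A ∪ A⁺ and on B ∪ B⁺ are connected. -/
variable {V : Type*}

lemma geoHull_convex (G : SimpleGraph V) (S : Set V) : GeoConvex G (geoHull G S) := by
  intro u hu v hv x hx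
  intro C hC
  exact hC.1 u (hu C hC) v (hv C hC) hx

lemma subset_geoHull (G : SimpleGraph V) (S : Set V) : S ⊆ geoHull G S := by
  intro x hx C hC
  exact hC.2 hx

/-- Main auxiliary lemma: one side is connected. -/
lemma side_connected (G : SimpleGraph V) (hc : G.Connected)
    (A B : Set V) (hAconv : GeoConvex G A)
    (hB : shadow G B A = B)
    (a : V) (ha : a ∈ A) (Aplus : Set V)
    (hAp : Aplus ⊆ (A ∪ B)ᶜ)
    (himplA : ∀ x ∈ Aplus, ∀ y ∈ (A ∪ B)ᶜ, (∃ z ∈ A, y ∈ interval G x z) → y ∈ Aplus) :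
    (SimpleGraph.induce (A ∪ Aplus) G).Connected := by
  have key : ∀ n : ℕ, ∀ x, ∀ hx : x ∈ A ∪ Aplus, G.dist x a = n →
      (SimpleGraph.induce (A ∪ Aplus) G).Reachable ⟨x, hx⟩ ⟨a, Or.inl ha⟩ := by
    intro n
    induction n with
    | zero =>
      intro x hx hd
      have hxa : x = a := (hc.dist_eq_zero_iff).mp hd
      subst hxa
      rfl
    | succ n ih =>
      intro x hx hd
      obtain ⟨p, hp⟩ := hc.exists_walk_length_eq_dist x a
      rw [hd] at hp
      cases p with
      | nil => simp at hp
      | @cons _ x1 _ hadj q =>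
        simp only [SimpleGraph.Walk.length_cons, Nat.succ_eq_add_one, add_left_inj] at hp
        have hq : G.dist x1 a ≤ n := hp ▸ SimpleGraph.dist_le q
        have hq' : G.dist x1 a = n := by
          have htri : G.dist x a ≤ G.dist x x1 + G.dist x1 a := hc.dist_triangle
          have h1 : G.dist x x1 ≤ 1 := by
            simpa using SimpleGraph.dist_le (hadj.toWalk)
          omega
        have hd1 : G.dist x x1 = 1 := by
          have htri : G.dist x a ≤ G.dist x x1 + G.dist x1 a := hc.dist_triangle
          have h1 : G.dist x x1 ≤ 1 := by
            simpa using SimpleGraph.dist_le (hadj.toWalk)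
          omega
        have hint : x1 ∈ interval G x a := by
          simp only [interval, Set.mem_setOf_eq]
          omega
        -- x1 ∈ A ∪ Aplus
        have hx1 : x1 ∈ A ∪ Aplus := by
          rcases hx with hxA | hxAp
          · exact Or.inl (hAconv x hxA a ha hint)
          · -- x ∈ Aplus, so x ∉ B, so hull (A ∪ {x}) misses B
            have hxnB : x ∉ B := fun hxB => (hAp hxAp) (Or.inr hxB)
            have hx1nB : x1 ∉ B := by
              intro hx1B
              have hxhull : x ∈ geoHull G (A ∪ {x}) :=
                subset_geoHull G _ (Or.inr rfl)
              have hahull : a ∈ geoHull G (A ∪ {x}) :=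
                subset_geoHull G _ (Or.inl ha)
              have hx1hull : x1 ∈ geoHull G (A ∪ {x}) :=
                geoHull_convex G _ x hxhull a hahull hint
              have : x ∈ shadow G B A := ⟨x1, hx1hull, hx1B⟩
              rw [hB] at this
              exact hxnB this
            by_cases hx1A : x1 ∈ A
            · exact Or.inl hx1A
            · refine Or.inr (himplA x hxAp x1 ?_ ⟨a, ha, hint⟩)
              intro h
              rcases h with h | h
              · exact hx1A h
              · exact hx1nB h
        have hstep : (SimpleGraph.induce (A ∪ Aplus) G).Adj ⟨x, hx⟩ ⟨x1, hx1⟩ := hadj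
        exact (hstep.reachable).trans (ih x1 hx1 hq')
  rw [SimpleGraph.connected_iff]
  refine ⟨?_, ⟨⟨a, Or.inl ha⟩⟩⟩
  rintro ⟨u, hu⟩ ⟨v, hv⟩
  exact (key (G.dist u a) u hu rfl).trans (key (G.dist v a) v hv rfl).symm

theorem sides_connected (G : SimpleGraph V) (hc : G.Connected) (hTC : TriangleCond G)
    (A B : Set V) (hAconv : GeoConvex G A) (hBconv : GeoConvex G B)
    (hdisj : Disjoint A B)
    (hA : shadow G A B = A) (hB : shadow G B A = B)
    (hosc : ∃ a ∈ A, ∃ b ∈ B, G.Adj a b)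
    (Aplus Bplus : Set V)
    (hpart : Aplus ∪ Bplus = (A ∪ B)ᶜ) (hpdisj : Disjoint Aplus Bplus)
    (himplA : ∀ x ∈ Aplus, ∀ y ∈ (A ∪ B)ᶜ, (∃ z ∈ A, y ∈ interval G x z) → y ∈ Aplus)
    (himplB : ∀ x ∈ Bplus, ∀ y ∈ (A ∪ B)ᶜ, (∃ z ∈ B, y ∈ interval G x z) → y ∈ Bplus) :
    (SimpleGraph.induce (A ∪ Aplus) G).Connected ∧
      (SimpleGraph.induce (B ∪ Bplus) G).Connected := by
  obtain ⟨a, ha, b, hb, hab⟩ := hosc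
  have hApsub : Aplus ⊆ (A ∪ B)ᶜ := hpart ▸ Set.subset_union_left
  have hBpsub : Bplus ⊆ (A ∪ B)ᶜ := hpart ▸ Set.subset_union_right
  constructor
  · exact side_connected G hc A B hAconv hB a ha Aplus hApsub himplA
  · have hBpsub' : Bplus ⊆ (B ∪ A)ᶜ := by rw [Set.union_comm]; exact hBpsub
    have himplB' : ∀ x ∈ Bplus, ∀ y ∈ (B ∪ A)ᶜ, (∃ z ∈ B, y ∈ interval G x z) → y ∈ Bplus := by
      intro x hx y hy
      rw [Set.union_comm] at hy
      exact himplB x hx y hy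
    exact side_connected G hc B A hBconv hA b hb Bplus hBpsub' himplB'
end
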